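/- arXiv:1911.01973 — 2 statements merged into one kernel-verified Lean document; each statement's English description precedes it below -/
import Mathlib

section
/- For all vectors a, b ∈ {0,1}^d, the Hamming distance between f_A(a) and f_B(b) satisfies ‖f_A(a) − f_B(b)‖_0 = 2d + 2·⟨a, b⟩, where ⟨a, b⟩ = Σ_{j=1}^d a_j b_j is the integer inner product. In particular ‖f_A(a) − f_B(b)‖_0 ≥ 2d always, with equality if and only if ⟨a, b⟩ = 0. -/
/-- The coding map `g_A : {0,1} → {0,1}^5`, with
`g_A 0 = (1,1,0,0,0)` and `g_A 1 = (0,0,1,1,0)`. -/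
def gA : Fin 2 → Fin 5 → Fin 2 := ![![1, 1, 0, 0, 0], ![0, 0, 1, 1, 0]]

/-- The coding map `g_B : {0,1} → {0,1}^5`, with
`g_B 0 = (1,0,1,0,0)` and `g_B 1 = (0,1,0,0,1)`. -/
def gB : Fin 2 → Fin 5 → Fin 2 := ![![1, 0, 1, 0, 0], ![0, 1, 0, 0, 1]]

/-- `f_A(a) ∈ {0,1}^{5d}` is the concatenation of the blocks
`g_A(a_1), …, g_A(a_d)` (coordinates indexed by `Fin d × Fin 5`). -/
def fA (d : ℕ) (a : Fin d → Fin 2) : Fin d × Fin 5 → Fin 2 :=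
  fun p => gA (a p.1) p.2

/-- `f_B(b) ∈ {0,1}^{5d}` is the concatenation of the blocks
`g_B(b_1), …, g_B(b_d)`. -/
def fB (d : ℕ) (b : Fin d → Fin 2) : Fin d × Fin 5 → Fin 2 :=
  fun p => gB (b p.1) p.2

lemma block_dist (x y : Fin 2) : hammingDist (gA x) (gB y) = 2 + 2 * x.val * y.val := by
  fin_cases x <;> fin_cases y <;> decide

lemma total_dist (d : ℕ) (a b : Fin d → Fin 2) :
    hammingDist (fA d a) (fB d b) = 2 * d + 2 * ∑ j, (a j).val * (b j).val := by
  have : hammingDist (fA d a) (fB d b) = ∑ j, hammingDist (gA (a j)) (gB (b j)) := by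
    simp only [hammingDist, Finset.card_filter, Fintype.sum_prod_type]
    rfl
  rw [this]
  simp only [block_dist]
  rw [Finset.sum_add_distrib, Finset.sum_const, Finset.card_univ, Fintype.card_fin,
    Finset.mul_sum, smul_eq_mul, mul_comm d 2]
  congr 1
  · congr 1
    ext j
    ring

/-- For all `a, b ∈ {0,1}^d`, the Hamming distance between `f_A(a)` and
`f_B(b)` equals `2d + 2⟨a,b⟩` where `⟨a,b⟩` is the integer inner product; in
particular it is always at least `2d`, with equality iff `⟨a,b⟩ = 0`. -/
theorem hammingDist_fA_fB (d : ℕ) (a b : Fin d → Fin 2) :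
    ((hammingDist (fA d a) (fB d b) : ℤ)
        = 2 * d + 2 * ∑ j, ((a j).val : ℤ) * ((b j).val : ℤ))
      ∧ 2 * d ≤ hammingDist (fA d a) (fB d b)
      ∧ ((hammingDist (fA d a) (fB d b) : ℤ) = 2 * d
          ↔ ∑ j, ((a j).val : ℤ) * ((b j).val : ℤ) = 0) := by
  have h := total_dist d a b
  have hsum : (∑ j, ((a j).val : ℤ) * ((b j).val : ℤ))
      = ((∑ j, (a j).val * (b j).val : ℕ) : ℤ) := by push_cast; ring
  have hz : ((hammingDist (fA d a) (fB d b) : ℤ))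
      = 2 * d + 2 * ∑ j, ((a j).val : ℤ) * ((b j).val : ℤ) := by
    rw [h, hsum]; push_cast; ring
  refine ⟨hz, ?_, ?_⟩
  · omega
  · constructor
    · intro he
      rw [hz] at he
      have hnn : 0 ≤ ∑ j, ((a j).val : ℤ) * ((b j).val : ℤ) := by
        rw [hsum]; positivity
      omega
    · intro he; rw [hz, he]; ring
end

section
/- Let A, B be nonempty finite sets of vectors in {0,1}^d. There exist a ∈ A and b ∈ B with integer inner product ⟨a, b⟩ = 0 if and only if the minimum over a ∈ A, b ∈ B of the Hamming distance ‖f_A(a) − f_B(b)‖_0 equals 2d. This is the correctness of the fine-grained reduction from Orthogonal Vectors to the Bichromatic Closest Pair problem in the Hamming metric. -/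
/-- Correctness of the fine-grained reduction from Orthogonal Vectors to the
Bichromatic Closest Pair problem in the Hamming metric: for nonempty finite
sets `A, B ⊆ {0,1}^d`, there exist `a ∈ A`, `b ∈ B` with integer inner product
`⟨a,b⟩ = 0` iff the minimum over `a ∈ A`, `b ∈ B` of the Hamming distance
`‖f_A(a) − f_B(b)‖₀` equals `2d`. -/
theorem ov_iff_bichromatic_min_hammingDist_eq
    (d : ℕ) (A B : Finset (Fin d → Fin 2)) (hA : A.Nonempty) (hB : B.Nonempty) :
    (∃ a ∈ A, ∃ b ∈ B, ∑ j, ((a j).val : ℤ) * ((b j).val : ℤ) = 0)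
      ↔ (A ×ˢ B).inf' (hA.product hB)
          (fun p => hammingDist (fA d p.1) (fB d p.2)) = 2 * d := by
  have key : ∀ a b : Fin d → Fin 2,
      hammingDist (fA d a) (fB d b) = 2 * d + 2 * ∑ j, (a j).val * (b j).val := by
    intro a b
    have block : ∀ x y : Fin 2,
        (∑ i : Fin 5, if gA x i ≠ gB y i then 1 else 0) = 2 + 2 * (x.val * y.val) := by
      decide
    calc hammingDist (fA d a) (fB d b)
        = ∑ p : Fin d × Fin 5, if fA d a p ≠ fB d b p then 1 else 0 := by
          rw [hammingDist, Finset.card_filter]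
      _ = ∑ j : Fin d, ∑ i : Fin 5, if gA (a j) i ≠ gB (b j) i then 1 else 0 := by
          rw [Fintype.sum_prod_type]; rfl
      _ = ∑ j : Fin d, (2 + 2 * ((a j).val * (b j).val)) := by
          simp only [block]
      _ = 2 * d + 2 * ∑ j, (a j).val * (b j).val := by
          rw [Finset.sum_add_distrib, ← Finset.mul_sum]
          simp [mul_comm]
  have natint : ∀ a b : Fin d → Fin 2,
      (∑ j, ((a j).val : ℤ) * ((b j).val : ℤ) = 0) ↔ (∑ j, (a j).val * (b j).val = 0) := by
    intro a b
    rw [show (∑ j, ((a j).val : ℤ) * ((b j).val : ℤ)) = ((∑ j, (a j).val * (b j).val : ℕ) : ℤ)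
      by push_cast; ring]
    exact Int.natCast_eq_zero
  constructor
  · rintro ⟨a, ha, b, hb, hab⟩
    have h1 : hammingDist (fA d a) (fB d b) = 2 * d := by
      rw [key, (natint a b).mp hab]; ring
    apply le_antisymm
    · exact le_trans (Finset.inf'_le _ (Finset.mk_mem_product ha hb)) (le_of_eq h1)
    · apply Finset.le_inf'
      rintro ⟨x, y⟩ _
      rw [key]; omega
  · intro h
    obtain ⟨⟨a, b⟩, hmem, heq⟩ := Finset.exists_mem_eq_inf' (hA.product hB)
      (fun p => hammingDist (fA d p.1) (fB d p.2))
    rw [heq] at h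
    simp only [Finset.mem_product] at hmem
    have h' : hammingDist (fA d a) (fB d b) = 2 * d := h
    refine ⟨a, hmem.1, b, hmem.2, (natint a b).mpr ?_⟩
    rw [key] at h'; omega
end
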